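/- arXiv:2009.13260 — 2 statements merged into one kernel-verified Lean document; each statement's English description precedes it below -/
import Mathlib

section
/- Let A be a UTA and (G(q))_{q∈Q} a reduced G-map for A. Then the relation ⊑_G on configurations, defined by (q, v) ⊑_G (q', v') iff q = q' and v ⊑_{G(q)} v', is a simulation on the UTA semantics. -/
open Classical

/-- Comparison operator `◁ ∈ {<, ≤}`. -/
inductive Ineq where
  | lt
  | le

def Ineq.holds : Ineq → ℝ → ℝ → Prop
  | .lt, a, b => a < b
  | .le, a, b => a ≤ b

/-- Atomic constraints over a set `X` of clocks. -/
inductive AC (X : Type) where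
  | tt
  | ff
  | upper (x : X) (o : Ineq) (c : ℕ)              -- x ◁ c
  | lower (c : ℕ) (o : Ineq) (x : X)              -- c ◁ x
  | dUpper (x y : X) (o : Ineq) (c : ℕ)           -- x - y ◁ c
  | dLower (c : ℕ) (o : Ineq) (x y : X)           -- c ◁ x - y

/-- A valuation maps clocks to nonnegative reals. -/
abbrev Val (X : Type) := X → NNReal

def AC.sat {X : Type} (v : Val X) : AC X → Prop
  | .tt => True
  | .ff => False
  | .upper x o c => o.holds (v x : ℝ) (c : ℝ)
  | .lower c o x => o.holds (c : ℝ) (v x : ℝ)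
  | .dUpper x y o c => o.holds ((v x : ℝ) - (v y : ℝ)) (c : ℝ)
  | .dLower c o x y => o.holds (c : ℝ) ((v x : ℝ) - (v y : ℝ))

/-- A constraint (guard) is a finite conjunction of atomic constraints. -/
abbrev Guard (X : Type) := List (AC X)

def satG {X : Type} (v : Val X) (g : Guard X) : Prop := ∀ φ ∈ g, AC.sat v φ

/-- The valuation `v + δ`. -/
def delay {X : Type} (v : Val X) (δ : NNReal) : Val X := fun x => v x + δ

/-- `v ⊑_G v'` for a set `G` of atomic constraints. -/
def simS {X : Type} (G : Set (AC X)) (v v' : Val X) : Prop :=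
  ∀ δ : NNReal, ∀ φ ∈ G, AC.sat (delay v δ) φ → AC.sat (delay v' δ) φ

/-- `v ⊑_φ v'` for a single constraint `φ` (a conjunction of atomic constraints). -/
def simC {X : Type} (g : Guard X) (v v' : Val X) : Prop :=
  ∀ δ : NNReal, satG (delay v δ) g → satG (delay v' δ) g

/-- Right-hand side of an atomic update: `x := c` or `x := y + d`. -/
inductive Rhs (X : Type) where
  | const (c : ℕ)
  | clock (y : X) (d : ℤ)

/-- An update assigns a right-hand side to every clock. -/
abbrev Update (X : Type) := X → Rhs X

def Rhs.eval {X : Type} (v : Val X) : Rhs X → ℝ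
  | .const c => (c : ℝ)
  | .clock y d => (v y : ℝ) + (d : ℝ)

/-- `up(v) ≥ 0`. -/
def Update.nonneg {X : Type} (up : Update X) (v : Val X) : Prop :=
  ∀ x, 0 ≤ Rhs.eval v (up x)

/-- The valuation `up(v)` (meaningful when `up.nonneg v`). -/
noncomputable def Update.app {X : Type} (up : Update X) (v : Val X) : Val X :=
  fun x => Real.toNNReal (Rhs.eval v (up x))

/-- `up⁻¹(φ)` for an atomic constraint `φ`: simultaneous substitution of `up_x` for `x`
rewritten to an equivalent atomic constraint (possibly ⊤ or ⊥). -/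
noncomputable def upInvA {X : Type} (up : Update X) : AC X → AC X
  | .tt => .tt
  | .ff => .ff
  | .upper x o c =>
      match up x with
      | .const a => if o.holds (a : ℝ) (c : ℝ) then .tt else .ff
      | .clock y d => if (c : ℤ) - d < 0 then .ff else .upper y o ((c : ℤ) - d).toNat
  | .lower c o x =>
      match up x with
      | .const a => if o.holds (c : ℝ) (a : ℝ) then .tt else .ff
      | .clock y d => if (c : ℤ) - d < 0 then .tt else .lower ((c : ℤ) - d).toNat o y
  | .dUpper x y o c =>
      match up x, up y with
      | .const a, .const b => if o.holds ((a : ℝ) - (b : ℝ)) (c : ℝ) then .tt else .ff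
      | .const a, .clock z e =>
          if (a : ℤ) - e - (c : ℤ) < 0 then .tt
          else .lower ((a : ℤ) - e - (c : ℤ)).toNat o z
      | .clock z e, .const b =>
          if (c : ℤ) + (b : ℤ) - e < 0 then .ff
          else .upper z o ((c : ℤ) + (b : ℤ) - e).toNat
      | .clock z e, .clock w f =>
          if (c : ℤ) - e + f < 0 then .dLower (-((c : ℤ) - e + f)).toNat o w z
          else .dUpper z w o ((c : ℤ) - e + f).toNat
  | .dLower c o x y =>
      match up x, up y with
      | .const a, .const b => if o.holds (c : ℝ) ((a : ℝ) - (b : ℝ)) then .tt else .ff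
      | .const a, .clock z e =>
          if (a : ℤ) - e - (c : ℤ) < 0 then .ff
          else .upper z o ((a : ℤ) - e - (c : ℤ)).toNat
      | .clock z e, .const b =>
          if (c : ℤ) + (b : ℤ) - e < 0 then .tt
          else .lower ((c : ℤ) + (b : ℤ) - e).toNat o z
      | .clock z e, .clock w f =>
          if (c : ℤ) - e + f < 0 then .dUpper w z o (-((c : ℤ) - e + f)).toNat
          else .dLower ((c : ℤ) - e + f).toNat o z w

/-- `up⁻¹` of a conjunction of atomic constraints. -/
noncomputable def upInvC {X : Type} (up : Update X) (g : Guard X) : Guard X :=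
  g.map (upInvA up)

/-- The guard `g` contains an upper-bound constraint `x ◁₁ c` on clock `x`. -/
def hasUpperG {X : Type} (g : Guard X) (x : X) : Prop := ∃ o c, AC.upper x o c ∈ g

/-- The smallest constant of an upper-bound constraint on `x` in `g`. -/
noncomputable def minUpperG {X : Type} (g : Guard X) (x : X) : ℕ :=
  sInf {c | ∃ o, AC.upper x o c ∈ g}

/-- Condition of Case 3 of the table defining `wp`. -/
def case3G {X : Type} (g : Guard X) (x y : X) (d : ℕ) : Prop :=
  (∃ o c, AC.upper x o c ∈ g ∧ c < d) ∨
  (∃ o c, AC.dUpper x y o c ∈ g ∧ c < d) ∨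
  (∃ o e, AC.dLower e o x y ∈ g ∧ d < e)

/-- The pre `wp(φ, g, up)` of an atomic constraint under a guard-update pair. -/
noncomputable def wp {X : Type} (φ : AC X) (g : Guard X) (up : Update X) : AC X :=
  match upInvA up φ with
  | .upper x o d => if hasUpperG g x then .tt else .upper x o d
  | .lower d o x =>
      if hasUpperG g x ∧ minUpperG g x < d then .lower (minUpperG g x) .le x
      else .lower d o x
  | .dUpper x y o d => if case3G g x y d then .tt else .dUpper x y o d
  | .dLower d o x y => if case3G g x y d then .tt else .dLower d o x y
  | ψ => ψ

/-- A transition of an updatable timed automaton. -/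
structure UTrans (Q X : Type) where
  src : Q
  guard : Guard X
  update : Update X
  tgt : Q

/-- An updatable timed automaton (UTA). -/
structure UTA (Q X : Type) where
  init : Q
  trans : List (UTrans Q X)
  acc : Set Q

/-- (Non-reduced) G-map. -/
def IsGMap {Q X : Type} (A : UTA Q X) (G : Q → Set (AC X)) : Prop :=
  ∀ t ∈ A.trans,
    (∀ φ ∈ t.guard, φ ∈ G t.src) ∧
    (∀ x : X, upInvA t.update (AC.lower 0 .le x) ∈ G t.src) ∧
    (∀ φ ∈ G t.tgt, upInvA t.update φ ∈ G t.src)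

/-- Reduced G-map. -/
def IsRedGMap {Q X : Type} (A : UTA Q X) (G : Q → Set (AC X)) : Prop :=
  ∀ t ∈ A.trans,
    (∀ φ ∈ t.guard, φ ∈ G t.src) ∧
    (∀ x : X, wp (AC.lower 0 .le x) t.guard t.update ∈ G t.src) ∧
    (∀ φ ∈ G t.tgt, wp φ t.guard t.update ∈ G t.src)

/-- Pointwise intersection of all G-maps: the smallest G-map. -/
def minGMap {Q X : Type} (A : UTA Q X) : Q → Set (AC X) :=
  fun q => ⋂ G ∈ {G | IsGMap A G}, G q

/-- Pointwise intersection of all reduced G-maps: the smallest reduced G-map. -/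
def minRedGMap {Q X : Type} (A : UTA Q X) : Q → Set (AC X) :=
  fun q => ⋂ G ∈ {G | IsRedGMap A G}, G q

/-- Action transition `(q, v) →t (q', up(v))` of the UTA semantics. -/
def actionStep {Q X : Type} (A : UTA Q X) (t : UTrans Q X) (c c' : Q × Val X) : Prop :=
  t ∈ A.trans ∧ c.1 = t.src ∧ c'.1 = t.tgt ∧ satG c.2 t.guard ∧
  t.update.nonneg c.2 ∧ c'.2 = t.update.app c.2

/-- A simulation on the UTA semantics: a preorder relating only configurations with
the same state, preserved by delays and actions. -/
def IsSimulation {Q X : Type} (A : UTA Q X)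
    (R : (Q × Val X) → (Q × Val X) → Prop) : Prop :=
  (∀ p, R p p) ∧
  (∀ p₁ p₂ p₃, R p₁ p₂ → R p₂ p₃ → R p₁ p₃) ∧
  (∀ p p', R p p' → p.1 = p'.1) ∧
  (∀ q (v v' : Val X) (δ : NNReal), R (q, v) (q, v') → R (q, delay v δ) (q, delay v' δ)) ∧
  (∀ q (v v' : Val X) t p₁, R (q, v) (q, v') → actionStep A t (q, v) p₁ →
      ∃ v₁', actionStep A t (q, v') (p₁.1, v₁') ∧ R p₁ (p₁.1, v₁'))

/-- A run of a UTA: alternating delays and actions from the initial configuration. -/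
def IsRun {Q X : Type} (A : UTA Q X) (n : ℕ) (qs : ℕ → Q) (ds : ℕ → NNReal)
    (vs : ℕ → Val X) : Prop :=
  qs 0 = A.init ∧ (∀ x, vs 0 x = 0) ∧
  ∀ i, i < n → ∃ t, actionStep A t (qs i, delay (vs i) (ds i)) (qs (i + 1), vs (i + 1))

/-- Configurations occurring on some run of the UTA. -/
def ReachCfg {Q X : Type} (A : UTA Q X) (p : Q × Val X) : Prop :=
  ∃ n qs ds vs, IsRun A n qs ds vs ∧ ∃ δ : NNReal, p.1 = qs n ∧ p.2 = delay (vs n) δ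

/-- Timed automaton with subtraction: every atomic update is `x := 0` or `x := x - c`. -/
def IsSubtractionTA {Q X : Type} (A : UTA Q X) : Prop :=
  ∀ t ∈ A.trans, ∀ x : X,
    t.update x = Rhs.const 0 ∨ ∃ c : ℕ, t.update x = Rhs.clock x (-(c : ℤ))

/-- Timed automaton with bounded subtraction with bounds `M`. -/
def IsBoundedSub {Q X : Type} (A : UTA Q X) (M : X → ℕ) : Prop :=
  IsSubtractionTA A ∧
  ∀ q v, ReachCfg A (q, v) → ∀ t ∈ A.trans, t.src = q → satG v t.guard →
    ∀ (x : X) (c : ℕ), 0 < c → t.update x = Rhs.clock x (-(c : ℤ)) → (v x : ℝ) ≤ (M x : ℝ)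

/-- Timed automaton with syntactically bounded subtraction. -/
def IsSynBoundedSub {Q X : Type} (A : UTA Q X) : Prop :=
  IsSubtractionTA A ∧
  ∀ t ∈ A.trans, ∀ (x : X) (c : ℕ), 0 < c → t.update x = Rhs.clock x (-(c : ℤ)) →
    ∃ o c', AC.upper x o c' ∈ t.guard

/-- The constant of an atomic constraint. -/
def AC.cst {X : Type} : AC X → ℕ
  | .tt => 0
  | .ff => 0
  | .upper _ _ c => c
  | .lower c _ _ => c
  | .dUpper _ _ _ c => c
  | .dLower c _ _ _ => c

/-- The constant occurring in the right-hand side of an atomic update. -/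
def Rhs.cst {X : Type} : Rhs X → ℕ
  | .const c => c
  | .clock _ d => d.natAbs

/-- Maximum constant occurring in the guards of a UTA. -/
def maxGuardConst {Q X : Type} (A : UTA Q X) : ℕ :=
  (A.trans.map fun t => (t.guard.map AC.cst).foldr max 0).foldr max 0

/-- Maximum absolute value of a constant occurring in the updates of a UTA. -/
noncomputable def maxUpdateConst {Q X : Type} [Fintype X] (A : UTA Q X) : ℕ :=
  (A.trans.map fun t => Finset.univ.sup fun x => Rhs.cst (t.update x)).foldr max 0

/-- `L(G)(x)`: maximum constant of a lower-bound constraint on `x` in `G` (⊥ = −∞ if none). -/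
noncomputable def Lb {X : Type} (G : Set (AC X)) (x : X) : WithBot ℕ∞ :=
  ⨆ c ∈ {c : ℕ | ∃ o, AC.lower c o x ∈ G}, ((c : ℕ∞) : WithBot ℕ∞)

/-- `U(G)(x)`: maximum constant of an upper-bound constraint on `x` in `G` (⊥ = −∞ if none). -/
noncomputable def Ub {X : Type} (G : Set (AC X)) (x : X) : WithBot ℕ∞ :=
  ⨆ c ∈ {c : ℕ | ∃ o, AC.upper x o c ∈ G}, ((c : ℕ∞) : WithBot ℕ∞)

def AC.isDiag {X : Type} : AC X → Prop
  | .dUpper _ _ _ _ => True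
  | .dLower _ _ _ _ => True
  | _ => False

/-- `G^d`: the diagonal constraints of `G`. -/
def diagOf {X : Type} (G : Set (AC X)) : Set (AC X) := {φ ∈ G | φ.isDiag}

def AC.isWeak {X : Type} : AC X → Prop
  | .upper _ o _ => o = .le
  | .lower _ o _ => o = .le
  | .dUpper _ _ o _ => o = .le
  | .dLower _ o _ _ => o = .le
  | _ => True

/-- All atomic constraints in guards of `A` use the weak inequality `≤`. -/
def weakGuards {Q X : Type} (A : UTA Q X) : Prop :=
  ∀ t ∈ A.trans, ∀ φ ∈ t.guard, φ.isWeak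

/-- A context: an atomic constraint with a hole for the constant. -/
inductive Ctx (X : Type) where
  | upper (x : X)      -- x ≤ ·
  | lower (x : X)      -- · ≤ x
  | dUpper (x y : X)   -- x - y ≤ ·
  | dLower (x y : X)   -- · ≤ x - y

def Ctx.fill {X : Type} : Ctx X → ℕ → AC X
  | .upper x, c => .upper x .le c
  | .lower x, c => .lower c .le x
  | .dUpper x y, c => .dUpper x y .le c
  | .dLower x y, c => .dLower c .le x y

/-- Propagation sequence `(q_i, ctx_i[c_i]) → ⋯ → (q_j, ctx_j[c_j])`. -/
def PropSeq {Q X : Type} (A : UTA Q X) (i j : ℕ) (qs : ℕ → Q) (ctxs : ℕ → Ctx X)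
    (cs : ℕ → ℕ) : Prop :=
  ∀ k, i ≤ k → k < j → ∃ t ∈ A.trans, t.src = qs (k + 1) ∧ t.tgt = qs k ∧
    (ctxs (k + 1)).fill (cs (k + 1)) = wp ((ctxs k).fill (cs k)) t.guard t.update


/-! ### Auxiliary lemmas -/

lemma Ineq.holds_le {o : Ineq} {a b : ℝ} (h : o.holds a b) : a ≤ b := by
  cases o
  · exact le_of_lt h
  · exact h

lemma Ineq.holds_of_lt {o : Ineq} {a b : ℝ} (h : a < b) : o.holds a b := by
  cases o
  · exact h
  · exact le_of_lt h

lemma Ineq.holds_mono {o : Ineq} {a a' b b' : ℝ} (ha : a' ≤ a) (hb : b ≤ b')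
    (h : o.holds a b) : o.holds a' b' := by
  cases o
  · exact lt_of_le_of_lt ha (lt_of_lt_of_le h hb)
  · exact le_trans ha (le_trans h hb)

lemma Ineq.holds_congr {o : Ineq} {a b a' b' : ℝ} (hh : a - b = a' - b') :
    o.holds a b ↔ o.holds a' b' := by
  cases o <;> simp only [Ineq.holds] <;> constructor <;> intro h <;> linarith

lemma delay_coe {X : Type} (v : Val X) (δ : NNReal) (x : X) :
    ((delay v δ x : ℝ)) = (v x : ℝ) + δ := by simp [delay]

lemma delay_zero {X : Type} (v : Val X) : delay v 0 = v := by
  funext x; simp [delay]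

lemma delay_delay {X : Type} (v : Val X) (a b : NNReal) :
    delay (delay v a) b = delay v (a + b) := by
  funext x; simp [delay, add_assoc]

lemma appdelay {X : Type} (up : Update X) (v : Val X) (h : up.nonneg v) (δ : NNReal) (x : X) :
    ((delay (Update.app up v) δ x : ℝ)) = Rhs.eval v (up x) + δ := by
  simp [delay, Update.app, Real.coe_toNNReal _ (h x)]

lemma sat_transfer {X : Type} {G : Set (AC X)} {v v' : Val X} (hs : simS G v v')
    {φ : AC X} (hφ : φ ∈ G) (h : AC.sat v φ) : AC.sat v' φ := by
  have := hs 0 φ hφ (by rwa [delay_zero])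
  rwa [delay_zero] at this

lemma wp_tt' {X : Type} {φ : AC X} {g : Guard X} {up : Update X}
    (h : upInvA up φ = AC.tt) : wp φ g up = AC.tt := by
  unfold wp; rw [h]

lemma wp_ff' {X : Type} {φ : AC X} {g : Guard X} {up : Update X}
    (h : upInvA up φ = AC.ff) : wp φ g up = AC.ff := by
  unfold wp; rw [h]

lemma wp_upper {X : Type} {φ : AC X} {g : Guard X} {up : Update X} {x : X} {o : Ineq} {d : ℕ}
    (h : upInvA up φ = AC.upper x o d) :
    wp φ g up = if hasUpperG g x then AC.tt else AC.upper x o d := by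
  unfold wp; rw [h]

lemma wp_lower {X : Type} {φ : AC X} {g : Guard X} {up : Update X} {x : X} {o : Ineq} {d : ℕ}
    (h : upInvA up φ = AC.lower d o x) :
    wp φ g up = if hasUpperG g x ∧ minUpperG g x < d then AC.lower (minUpperG g x) .le x
      else AC.lower d o x := by
  unfold wp; rw [h]

lemma wp_dUpper {X : Type} {φ : AC X} {g : Guard X} {up : Update X} {x y : X} {o : Ineq} {d : ℕ}
    (h : upInvA up φ = AC.dUpper x y o d) :
    wp φ g up = if case3G g x y d then AC.tt else AC.dUpper x y o d := by
  unfold wp; rw [h]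

lemma wp_dLower {X : Type} {φ : AC X} {g : Guard X} {up : Update X} {x y : X} {o : Ineq} {d : ℕ}
    (h : upInvA up φ = AC.dLower d o x y) :
    wp φ g up = if case3G g x y d then AC.tt else AC.dLower d o x y := by
  unfold wp; rw [h]

lemma minUpper_mem {X : Type} {g : Guard X} {y : X} (h : hasUpperG g y) :
    ∃ o, AC.upper y o (minUpperG g y) ∈ g := by
  obtain ⟨o, c, hc⟩ := h
  have hne : {c | ∃ o, AC.upper y o c ∈ g}.Nonempty := ⟨c, o, hc⟩
  exact Nat.sInf_mem hne

lemma sim_upper {X : Type} {G : Set (AC X)} {v v' : Val X} (hs : simS G v v')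
    {y : X} {o : Ineq} {c : ℕ} (hm : AC.upper y o c ∈ G)
    (hv : Ineq.holds o (v y : ℝ) c) : (v' y : ℝ) ≤ v y := by
  by_contra hlt
  push_neg at hlt
  have hvy : (v y : ℝ) ≤ c := Ineq.holds_le hv
  cases o with
  | le =>
    have h1 := hs (Real.toNNReal ((c : ℝ) - v y)) _ hm ?_
    · simp only [AC.sat, delay_coe] at h1
      rw [Real.coe_toNNReal _ (by linarith)] at h1
      simp only [Ineq.holds] at h1
      linarith
    · simp only [AC.sat, delay_coe]
      rw [Real.coe_toNNReal _ (by linarith)]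
      simp only [Ineq.holds]
      linarith
  | lt =>
    have hvc : (v y : ℝ) < c := hv
    rcases le_or_gt (c : ℝ) (v' y) with h' | h'
    · have h1 := hs 0 _ hm ?_
      · simp only [AC.sat, delay_coe, NNReal.coe_zero, add_zero] at h1
        simp only [Ineq.holds] at h1
        linarith
      · simp only [AC.sat, delay_coe, NNReal.coe_zero, add_zero]
        exact hvc
    · have h1 := hs (Real.toNNReal ((c : ℝ) - v' y)) _ hm ?_
      · simp only [AC.sat, delay_coe] at h1
        rw [Real.coe_toNNReal _ (by linarith)] at h1
        simp only [Ineq.holds] at h1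
        linarith
      · simp only [AC.sat, delay_coe]
        rw [Real.coe_toNNReal _ (by linarith)]
        simp only [Ineq.holds]
        linarith

lemma sim_lower {X : Type} {G : Set (AC X)} {v v' : Val X} (hs : simS G v v')
    {y : X} {m : ℕ} (hm : AC.lower m .le y ∈ G) (hv : (v y : ℝ) ≤ m) :
    (v y : ℝ) ≤ v' y := by
  have h1 := hs (Real.toNNReal ((m : ℝ) - v y)) _ hm ?_
  · simp only [AC.sat, delay_coe] at h1
    rw [Real.coe_toNNReal _ (by linarith)] at h1
    simp only [Ineq.holds] at h1
    linarith
  · simp only [AC.sat, delay_coe]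
    rw [Real.coe_toNNReal _ (by linarith)]
    simp only [Ineq.holds]
    linarith

lemma nonneg_transfer {X : Type} {Gq : Set (AC X)} {g : Guard X} {up : Update X}
    {v v' : Val X} (hs : simS Gq v v') (hvg : satG v g)
    (hwp0 : ∀ x : X, wp (AC.lower 0 .le x) g up ∈ Gq)
    (hnn : up.nonneg v) : up.nonneg v' := by
  intro x
  rcases hx : up x with a | ⟨y, d⟩
  · simp only [Rhs.eval]
    positivity
  · simp only [Rhs.eval]
    have hvy := hnn x
    rw [hx] at hvy
    simp only [Rhs.eval] at hvy
    by_cases hd : (0 : ℤ) - d < 0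
    · have hd' : (0 : ℝ) ≤ (d : ℝ) := by exact_mod_cast (show (0:ℤ) ≤ d by omega)
      have := (v' y).coe_nonneg
      linarith
    · have hDr : ((((0:ℤ) - d).toNat : ℕ) : ℝ) = -(d : ℝ) := by
        have h7 : (((0:ℤ) - d).toNat : ℤ) = 0 - d := Int.toNat_of_nonneg (by omega)
        rw [← Int.cast_natCast (R := ℝ), h7]
        push_cast
        ring
      have huinv : upInvA up (AC.lower 0 .le x) = AC.lower ((0:ℤ) - d).toNat .le y := by
        simp only [upInvA, hx, Nat.cast_zero, if_neg hd]
      have hwx := hwp0 x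
      rw [wp_lower huinv] at hwx
      by_cases hc : hasUpperG g y ∧ minUpperG g y < ((0:ℤ) - d).toNat
      · exfalso
        rw [if_pos hc] at hwx
        obtain ⟨o₂, h₂⟩ := minUpper_mem hc.1
        have h3 : (v y : ℝ) ≤ (minUpperG g y : ℝ) := Ineq.holds_le (hvg _ h₂)
        have h4 : ((minUpperG g y : ℕ) : ℝ) < -(d : ℝ) := by
          rw [← hDr]; exact_mod_cast hc.2
        linarith
      · rw [if_neg hc] at hwx
        have hsv : AC.sat v (AC.lower ((0:ℤ) - d).toNat .le y) := by
          show Ineq.holds .le _ _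
          simp only [Ineq.holds]
          rw [hDr]; linarith
        have h5 := sat_transfer hs hwx hsv
        have h6 : ((((0:ℤ) - d).toNat : ℕ) : ℝ) ≤ (v' y : ℝ) := h5
        rw [hDr] at h6
        linarith

lemma core {X : Type} {Gq : Set (AC X)} {g : Guard X} {up : Update X} {v v' : Val X}
    (hs : simS Gq v v') (hgG : ∀ γ ∈ g, γ ∈ Gq) (hvg : satG v g)
    (hnn : up.nonneg v) (hnn' : up.nonneg v')
    (φ : AC X) (hwp : wp φ g up ∈ Gq) (δ : NNReal)
    (h : AC.sat (delay (Update.app up v) δ) φ) : AC.sat (delay (Update.app up v') δ) φ := by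
  have hvg' : ∀ γ ∈ g, AC.sat v' γ := fun γ hγ => sat_transfer hs (hgG γ hγ) (hvg γ hγ)
  have hC1 : ∀ z : X, hasUpperG g z → (v' z : ℝ) ≤ v z := by
    intro z hz
    obtain ⟨o₁, c₁, h₁⟩ := hz
    exact sim_upper hs (hgG _ h₁) (hvg _ h₁)
  have hC2 : ∀ z : X, AC.lower (minUpperG g z) .le z ∈ Gq → hasUpperG g z →
      (v z : ℝ) ≤ v' z := by
    intro z hmem hz
    obtain ⟨o₂, h₂⟩ := minUpper_mem hz
    exact sim_lower hs hmem (Ineq.holds_le (hvg _ h₂))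
  cases φ with
  | tt => trivial
  | ff => exact h
  | upper x o c =>
    rcases hx : up x with a | ⟨y, d⟩
    all_goals simp only [AC.sat, appdelay up v hnn, appdelay up v' hnn', hx, Rhs.eval] at h ⊢
    · exact h
    · by_cases hneg : (c : ℤ) - d < 0
      · exfalso
        have hcd : (c : ℝ) < (d : ℝ) := by exact_mod_cast (show (c:ℤ) < d by omega)
        have h0 := (v y).coe_nonneg
        have h1 := δ.coe_nonneg
        have := Ineq.holds_le h
        linarith
      · have h7 : ((((c:ℤ) - d).toNat : ℤ)) = (c:ℤ) - d := Int.toNat_of_nonneg (by omega)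
        have hDr : ((((c:ℤ) - d).toNat : ℕ) : ℝ) = (c : ℝ) - (d : ℝ) := by
          rw [← Int.cast_natCast (R := ℝ), h7]; push_cast; ring
        have huinv : upInvA up (AC.upper x o c) = AC.upper y o ((c:ℤ) - d).toNat := by
          simp only [upInvA, hx, if_neg hneg]
        rw [wp_upper huinv] at hwp
        by_cases hU : hasUpperG g y
        · exact Ineq.holds_mono (by linarith [hC1 y hU]) le_rfl h
        · rw [if_neg hU] at hwp
          have hsat : AC.sat (delay v δ) (AC.upper y o ((c:ℤ) - d).toNat) := by
            simp only [AC.sat, delay_coe]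
            exact (Ineq.holds_congr (by rw [hDr]; ring)).mp h
          have hres := hs δ _ hwp hsat
          simp only [AC.sat, delay_coe] at hres
          exact (Ineq.holds_congr (by rw [hDr]; ring)).mp hres
  | lower c o x =>
    rcases hx : up x with a | ⟨y, d⟩
    all_goals simp only [AC.sat, appdelay up v hnn, appdelay up v' hnn', hx, Rhs.eval] at h ⊢
    · exact h
    · by_cases hneg : (c : ℤ) - d < 0
      · have hcd : (c : ℝ) < (d : ℝ) := by exact_mod_cast (show (c:ℤ) < d by omega)
        have h0 := (v' y).coe_nonneg
        have h1 := δ.coe_nonneg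
        exact Ineq.holds_of_lt (by linarith)
      · have h7 : ((((c:ℤ) - d).toNat : ℤ)) = (c:ℤ) - d := Int.toNat_of_nonneg (by omega)
        have hDr : ((((c:ℤ) - d).toNat : ℕ) : ℝ) = (c : ℝ) - (d : ℝ) := by
          rw [← Int.cast_natCast (R := ℝ), h7]; push_cast; ring
        have huinv : upInvA up (AC.lower c o x) = AC.lower ((c:ℤ) - d).toNat o y := by
          simp only [upInvA, hx, if_neg hneg]
        rw [wp_lower huinv] at hwp
        by_cases hc2 : hasUpperG g y ∧ minUpperG g y < ((c:ℤ) - d).toNat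
        · rw [if_pos hc2] at hwp
          have hmono := hC2 y hwp hc2.1
          exact Ineq.holds_mono le_rfl (by linarith) h
        · rw [if_neg hc2] at hwp
          have hsat : AC.sat (delay v δ) (AC.lower ((c:ℤ) - d).toNat o y) := by
            simp only [AC.sat, delay_coe]
            exact (Ineq.holds_congr (by rw [hDr]; ring)).mp h
          have hres := hs δ _ hwp hsat
          simp only [AC.sat, delay_coe] at hres
          exact (Ineq.holds_congr (by rw [hDr]; ring)).mp hres
  | dUpper x y o c =>
    rcases hx : up x with a | ⟨z, e⟩ <;> rcases hy : up y with b | ⟨w, f⟩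
    all_goals simp only [AC.sat, appdelay up v hnn, appdelay up v' hnn', hx, hy,
      Rhs.eval] at h ⊢
    · exact h
    · -- x := a, y := w + f
      by_cases hneg : (a : ℤ) - f - (c : ℤ) < 0
      · have hR : (a:ℝ) - (f:ℝ) - (c:ℝ) < 0 := by exact_mod_cast hneg
        have h0 := (v' w).coe_nonneg
        exact Ineq.holds_of_lt (by linarith)
      · have h7 : (((a:ℤ) - f - (c:ℤ)).toNat : ℤ) = (a:ℤ) - f - c := Int.toNat_of_nonneg (by omega)
        have hDr : ((((a:ℤ) - f - (c:ℤ)).toNat : ℕ) : ℝ) = (a:ℝ) - (f:ℝ) - (c:ℝ) := by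
          rw [← Int.cast_natCast (R := ℝ), h7]; push_cast; ring
        have huinv : upInvA up (AC.dUpper x y o c)
            = AC.lower ((a:ℤ) - f - (c:ℤ)).toNat o w := by
          simp only [upInvA, hx, hy, if_neg hneg]
        rw [wp_lower huinv] at hwp
        by_cases hc2 : hasUpperG g w ∧ minUpperG g w < ((a:ℤ) - f - (c:ℤ)).toNat
        · rw [if_pos hc2] at hwp
          have hmono := hC2 w hwp hc2.1
          exact Ineq.holds_mono (by linarith) le_rfl h
        · rw [if_neg hc2] at hwp
          have hsat : AC.sat (delay v 0) (AC.lower ((a:ℤ) - f - (c:ℤ)).toNat o w) := by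
            simp only [AC.sat, delay_coe, NNReal.coe_zero, add_zero]
            exact (Ineq.holds_congr (by rw [hDr]; ring)).mp h
          have hres := hs 0 _ hwp hsat
          simp only [AC.sat, delay_coe, NNReal.coe_zero, add_zero] at hres
          exact (Ineq.holds_congr (by rw [hDr]; ring)).mp hres
    · -- x := z + e, y := b
      by_cases hneg : (c : ℤ) + (b : ℤ) - e < 0
      · exfalso
        have hR : (c:ℝ) + (b:ℝ) - (e:ℝ) < 0 := by exact_mod_cast hneg
        have h0 := (v z).coe_nonneg
        have := Ineq.holds_le h
        linarith
      · have h7 : (((c:ℤ) + (b:ℤ) - e).toNat : ℤ) = (c:ℤ) + b - e := Int.toNat_of_nonneg (by omega)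
        have hDr : ((((c:ℤ) + (b:ℤ) - e).toNat : ℕ) : ℝ) = (c:ℝ) + (b:ℝ) - (e:ℝ) := by
          rw [← Int.cast_natCast (R := ℝ), h7]; push_cast; ring
        have huinv : upInvA up (AC.dUpper x y o c)
            = AC.upper z o ((c:ℤ) + (b:ℤ) - e).toNat := by
          simp only [upInvA, hx, hy, if_neg hneg]
        rw [wp_upper huinv] at hwp
        by_cases hU : hasUpperG g z
        · exact Ineq.holds_mono (by linarith [hC1 z hU]) le_rfl h
        · rw [if_neg hU] at hwp
          have hsat : AC.sat (delay v 0) (AC.upper z o ((c:ℤ) + (b:ℤ) - e).toNat) := by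
            simp only [AC.sat, delay_coe, NNReal.coe_zero, add_zero]
            exact (Ineq.holds_congr (by rw [hDr]; ring)).mp h
          have hres := hs 0 _ hwp hsat
          simp only [AC.sat, delay_coe, NNReal.coe_zero, add_zero] at hres
          exact (Ineq.holds_congr (by rw [hDr]; ring)).mp hres
    · -- x := z + e, y := w + f
      by_cases hneg : (c : ℤ) - e + f < 0
      · have h7 : ((-((c:ℤ) - e + f)).toNat : ℤ) = -((c:ℤ) - e + f) := Int.toNat_of_nonneg (by omega)
        have hDr : (((-((c:ℤ) - e + f)).toNat : ℕ) : ℝ) = -((c:ℝ) - (e:ℝ) + (f:ℝ)) := by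
          rw [← Int.cast_natCast (R := ℝ), h7]; push_cast; ring
        have huinv : upInvA up (AC.dUpper x y o c)
            = AC.dLower (-((c:ℤ) - e + f)).toNat o w z := by
          simp only [upInvA, hx, hy, if_pos hneg]
        rw [wp_dLower huinv] at hwp
        by_cases h3 : case3G g w z (-((c:ℤ) - e + f)).toNat
        · rcases h3 with ⟨o₁, c₁, hg₁, hlt⟩ | ⟨o₁, c₁, hg₁, hlt⟩ | ⟨o₁, e₁, hg₁, hlt⟩
          · exfalso
            have hlt' : ((c₁:ℕ):ℝ) < (((-((c:ℤ) - e + f)).toNat : ℕ) : ℝ) := by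
              exact_mod_cast hlt
            rw [hDr] at hlt'
            have hgw : (v w : ℝ) ≤ c₁ := Ineq.holds_le (hvg _ hg₁)
            have hle := Ineq.holds_le h
            have h0 := (v z).coe_nonneg
            linarith
          · exfalso
            have hlt' : ((c₁:ℕ):ℝ) < (((-((c:ℤ) - e + f)).toNat : ℕ) : ℝ) := by
              exact_mod_cast hlt
            rw [hDr] at hlt'
            have hgw : (v w : ℝ) - (v z : ℝ) ≤ c₁ := Ineq.holds_le (hvg _ hg₁)
            have hle := Ineq.holds_le h
            linarith
          · have hlt' : (((-((c:ℤ) - e + f)).toNat : ℕ) : ℝ) < (e₁:ℝ) := by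
              exact_mod_cast hlt
            rw [hDr] at hlt'
            have hgw : (e₁ : ℝ) ≤ (v' w : ℝ) - (v' z : ℝ) := Ineq.holds_le (hvg' _ hg₁)
            exact Ineq.holds_of_lt (by linarith)
        · rw [if_neg h3] at hwp
          have hsat : AC.sat (delay v 0) (AC.dLower (-((c:ℤ) - e + f)).toNat o w z) := by
            simp only [AC.sat, delay_coe, NNReal.coe_zero, add_zero]
            exact (Ineq.holds_congr (by rw [hDr]; ring)).mp h
          have hres := hs 0 _ hwp hsat
          simp only [AC.sat, delay_coe, NNReal.coe_zero, add_zero] at hres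
          exact (Ineq.holds_congr (by rw [hDr]; ring)).mp hres
      · have h7 : (((c:ℤ) - e + f).toNat : ℤ) = (c:ℤ) - e + f := Int.toNat_of_nonneg (by omega)
        have hDr : ((((c:ℤ) - e + f).toNat : ℕ) : ℝ) = (c:ℝ) - (e:ℝ) + (f:ℝ) := by
          rw [← Int.cast_natCast (R := ℝ), h7]; push_cast; ring
        have huinv : upInvA up (AC.dUpper x y o c)
            = AC.dUpper z w o ((c:ℤ) - e + f).toNat := by
          simp only [upInvA, hx, hy, if_neg hneg]
        rw [wp_dUpper huinv] at hwp
        by_cases h3 : case3G g z w ((c:ℤ) - e + f).toNat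
        · rcases h3 with ⟨o₁, c₁, hg₁, hlt⟩ | ⟨o₁, c₁, hg₁, hlt⟩ | ⟨o₁, e₁, hg₁, hlt⟩
          · have hlt' : ((c₁:ℕ):ℝ) < ((((c:ℤ) - e + f).toNat : ℕ) : ℝ) := by
              exact_mod_cast hlt
            rw [hDr] at hlt'
            have hgw : (v' z : ℝ) ≤ c₁ := Ineq.holds_le (hvg' _ hg₁)
            have h0 := (v' w).coe_nonneg
            exact Ineq.holds_of_lt (by linarith)
          · have hlt' : ((c₁:ℕ):ℝ) < ((((c:ℤ) - e + f).toNat : ℕ) : ℝ) := by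
              exact_mod_cast hlt
            rw [hDr] at hlt'
            have hgw : (v' z : ℝ) - (v' w : ℝ) ≤ c₁ := Ineq.holds_le (hvg' _ hg₁)
            exact Ineq.holds_of_lt (by linarith)
          · exfalso
            have hlt' : ((((c:ℤ) - e + f).toNat : ℕ) : ℝ) < (e₁:ℝ) := by
              exact_mod_cast hlt
            rw [hDr] at hlt'
            have hgw : (e₁ : ℝ) ≤ (v z : ℝ) - (v w : ℝ) := Ineq.holds_le (hvg _ hg₁)
            have hle := Ineq.holds_le h
            linarith
        · rw [if_neg h3] at hwp
          have hsat : AC.sat (delay v 0) (AC.dUpper z w o ((c:ℤ) - e + f).toNat) := by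
            simp only [AC.sat, delay_coe, NNReal.coe_zero, add_zero]
            exact (Ineq.holds_congr (by rw [hDr]; ring)).mp h
          have hres := hs 0 _ hwp hsat
          simp only [AC.sat, delay_coe, NNReal.coe_zero, add_zero] at hres
          exact (Ineq.holds_congr (by rw [hDr]; ring)).mp hres
  | dLower c o x y =>
    rcases hx : up x with a | ⟨z, e⟩ <;> rcases hy : up y with b | ⟨w, f⟩
    all_goals simp only [AC.sat, appdelay up v hnn, appdelay up v' hnn', hx, hy,
      Rhs.eval] at h ⊢
    · exact h
    · -- x := a, y := w + f
      by_cases hneg : (a : ℤ) - f - (c : ℤ) < 0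
      · exfalso
        have hR : (a:ℝ) - (f:ℝ) - (c:ℝ) < 0 := by exact_mod_cast hneg
        have h0 := (v w).coe_nonneg
        have := Ineq.holds_le h
        linarith
      · have h7 : (((a:ℤ) - f - (c:ℤ)).toNat : ℤ) = (a:ℤ) - f - c := Int.toNat_of_nonneg (by omega)
        have hDr : ((((a:ℤ) - f - (c:ℤ)).toNat : ℕ) : ℝ) = (a:ℝ) - (f:ℝ) - (c:ℝ) := by
          rw [← Int.cast_natCast (R := ℝ), h7]; push_cast; ring
        have huinv : upInvA up (AC.dLower c o x y)
            = AC.upper w o ((a:ℤ) - f - (c:ℤ)).toNat := by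
          simp only [upInvA, hx, hy, if_neg hneg]
        rw [wp_upper huinv] at hwp
        by_cases hU : hasUpperG g w
        · exact Ineq.holds_mono le_rfl (by linarith [hC1 w hU]) h
        · rw [if_neg hU] at hwp
          have hsat : AC.sat (delay v 0) (AC.upper w o ((a:ℤ) - f - (c:ℤ)).toNat) := by
            simp only [AC.sat, delay_coe, NNReal.coe_zero, add_zero]
            exact (Ineq.holds_congr (by rw [hDr]; ring)).mp h
          have hres := hs 0 _ hwp hsat
          simp only [AC.sat, delay_coe, NNReal.coe_zero, add_zero] at hres
          exact (Ineq.holds_congr (by rw [hDr]; ring)).mp hres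
    · -- x := z + e, y := b
      by_cases hneg : (c : ℤ) + (b : ℤ) - e < 0
      · have hR : (c:ℝ) + (b:ℝ) - (e:ℝ) < 0 := by exact_mod_cast hneg
        have h0 := (v' z).coe_nonneg
        exact Ineq.holds_of_lt (by linarith)
      · have h7 : (((c:ℤ) + (b:ℤ) - e).toNat : ℤ) = (c:ℤ) + b - e := Int.toNat_of_nonneg (by omega)
        have hDr : ((((c:ℤ) + (b:ℤ) - e).toNat : ℕ) : ℝ) = (c:ℝ) + (b:ℝ) - (e:ℝ) := by
          rw [← Int.cast_natCast (R := ℝ), h7]; push_cast; ring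
        have huinv : upInvA up (AC.dLower c o x y)
            = AC.lower ((c:ℤ) + (b:ℤ) - e).toNat o z := by
          simp only [upInvA, hx, hy, if_neg hneg]
        rw [wp_lower huinv] at hwp
        by_cases hc2 : hasUpperG g z ∧ minUpperG g z < ((c:ℤ) + (b:ℤ) - e).toNat
        · rw [if_pos hc2] at hwp
          have hmono := hC2 z hwp hc2.1
          exact Ineq.holds_mono le_rfl (by linarith) h
        · rw [if_neg hc2] at hwp
          have hsat : AC.sat (delay v 0) (AC.lower ((c:ℤ) + (b:ℤ) - e).toNat o z) := by
            simp only [AC.sat, delay_coe, NNReal.coe_zero, add_zero]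
            exact (Ineq.holds_congr (by rw [hDr]; ring)).mp h
          have hres := hs 0 _ hwp hsat
          simp only [AC.sat, delay_coe, NNReal.coe_zero, add_zero] at hres
          exact (Ineq.holds_congr (by rw [hDr]; ring)).mp hres
    · -- x := z + e, y := w + f
      by_cases hneg : (c : ℤ) - e + f < 0
      · have h7 : ((-((c:ℤ) - e + f)).toNat : ℤ) = -((c:ℤ) - e + f) := Int.toNat_of_nonneg (by omega)
        have hDr : (((-((c:ℤ) - e + f)).toNat : ℕ) : ℝ) = -((c:ℝ) - (e:ℝ) + (f:ℝ)) := by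
          rw [← Int.cast_natCast (R := ℝ), h7]; push_cast; ring
        have huinv : upInvA up (AC.dLower c o x y)
            = AC.dUpper w z o (-((c:ℤ) - e + f)).toNat := by
          simp only [upInvA, hx, hy, if_pos hneg]
        rw [wp_dUpper huinv] at hwp
        by_cases h3 : case3G g w z (-((c:ℤ) - e + f)).toNat
        · rcases h3 with ⟨o₁, c₁, hg₁, hlt⟩ | ⟨o₁, c₁, hg₁, hlt⟩ | ⟨o₁, e₁, hg₁, hlt⟩
          · have hlt' : ((c₁:ℕ):ℝ) < (((-((c:ℤ) - e + f)).toNat : ℕ) : ℝ) := by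
              exact_mod_cast hlt
            rw [hDr] at hlt'
            have hgw : (v' w : ℝ) ≤ c₁ := Ineq.holds_le (hvg' _ hg₁)
            have h0 := (v' z).coe_nonneg
            exact Ineq.holds_of_lt (by linarith)
          · have hlt' : ((c₁:ℕ):ℝ) < (((-((c:ℤ) - e + f)).toNat : ℕ) : ℝ) := by
              exact_mod_cast hlt
            rw [hDr] at hlt'
            have hgw : (v' w : ℝ) - (v' z : ℝ) ≤ c₁ := Ineq.holds_le (hvg' _ hg₁)
            exact Ineq.holds_of_lt (by linarith)
          · exfalso
            have hlt' : (((-((c:ℤ) - e + f)).toNat : ℕ) : ℝ) < (e₁:ℝ) := by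
              exact_mod_cast hlt
            rw [hDr] at hlt'
            have hgw : (e₁ : ℝ) ≤ (v w : ℝ) - (v z : ℝ) := Ineq.holds_le (hvg _ hg₁)
            have hle := Ineq.holds_le h
            linarith
        · rw [if_neg h3] at hwp
          have hsat : AC.sat (delay v 0) (AC.dUpper w z o (-((c:ℤ) - e + f)).toNat) := by
            simp only [AC.sat, delay_coe, NNReal.coe_zero, add_zero]
            exact (Ineq.holds_congr (by rw [hDr]; ring)).mp h
          have hres := hs 0 _ hwp hsat
          simp only [AC.sat, delay_coe, NNReal.coe_zero, add_zero] at hres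
          exact (Ineq.holds_congr (by rw [hDr]; ring)).mp hres
      · have h7 : (((c:ℤ) - e + f).toNat : ℤ) = (c:ℤ) - e + f := Int.toNat_of_nonneg (by omega)
        have hDr : ((((c:ℤ) - e + f).toNat : ℕ) : ℝ) = (c:ℝ) - (e:ℝ) + (f:ℝ) := by
          rw [← Int.cast_natCast (R := ℝ), h7]; push_cast; ring
        have huinv : upInvA up (AC.dLower c o x y)
            = AC.dLower ((c:ℤ) - e + f).toNat o z w := by
          simp only [upInvA, hx, hy, if_neg hneg]
        rw [wp_dLower huinv] at hwp
        by_cases h3 : case3G g z w ((c:ℤ) - e + f).toNat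
        · rcases h3 with ⟨o₁, c₁, hg₁, hlt⟩ | ⟨o₁, c₁, hg₁, hlt⟩ | ⟨o₁, e₁, hg₁, hlt⟩
          · exfalso
            have hlt' : ((c₁:ℕ):ℝ) < ((((c:ℤ) - e + f).toNat : ℕ) : ℝ) := by
              exact_mod_cast hlt
            rw [hDr] at hlt'
            have hgw : (v z : ℝ) ≤ c₁ := Ineq.holds_le (hvg _ hg₁)
            have hle := Ineq.holds_le h
            have h0 := (v w).coe_nonneg
            linarith
          · exfalso
            have hlt' : ((c₁:ℕ):ℝ) < ((((c:ℤ) - e + f).toNat : ℕ) : ℝ) := by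
              exact_mod_cast hlt
            rw [hDr] at hlt'
            have hgw : (v z : ℝ) - (v w : ℝ) ≤ c₁ := Ineq.holds_le (hvg _ hg₁)
            have hle := Ineq.holds_le h
            linarith
          · have hlt' : ((((c:ℤ) - e + f).toNat : ℕ) : ℝ) < (e₁:ℝ) := by
              exact_mod_cast hlt
            rw [hDr] at hlt'
            have hgw : (e₁ : ℝ) ≤ (v' z : ℝ) - (v' w : ℝ) := Ineq.holds_le (hvg' _ hg₁)
            exact Ineq.holds_of_lt (by linarith)
        · rw [if_neg h3] at hwp
          have hsat : AC.sat (delay v 0) (AC.dLower ((c:ℤ) - e + f).toNat o z w) := by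
            simp only [AC.sat, delay_coe, NNReal.coe_zero, add_zero]
            exact (Ineq.holds_congr (by rw [hDr]; ring)).mp h
          have hres := hs 0 _ hwp hsat
          simp only [AC.sat, delay_coe, NNReal.coe_zero, add_zero] at hres
          exact (Ineq.holds_congr (by rw [hDr]; ring)).mp hres
/-- Theorem: reduced G-maps give simulations. If `G` is a reduced
G-map for the UTA `A`, then the relation `(q,v) ⊑_G (q',v') ⟺ q = q' ∧ v ⊑_{G(q)} v'`
is a simulation on the UTA semantics. -/
theorem stmt3 {Q X : Type} [Fintype Q] [Fintype X] (A : UTA Q X)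
    (G : Q → Set (AC X)) (hG : IsRedGMap A G) :
    IsSimulation A (fun p p' => p.1 = p'.1 ∧ simS (G p.1) p.2 p'.2) := by
  refine ⟨?_, ?_, ?_, ?_, ?_⟩
  · exact fun p => ⟨rfl, fun δ φ hφ hsat => hsat⟩
  · rintro ⟨q₁, v₁⟩ ⟨q₂, v₂⟩ ⟨q₃, v₃⟩ ⟨h12, s12⟩ ⟨h23, s23⟩
    dsimp only at h12 h23 s12 s23 ⊢
    subst h12
    subst h23
    exact ⟨rfl, fun δ φ hφ hsat => s23 δ φ hφ (s12 δ φ hφ hsat)⟩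
  · exact fun p p' h => h.1
  · rintro q v v' δ ⟨-, hsim⟩
    refine ⟨rfl, fun δ' φ hφ hsat => ?_⟩
    rw [delay_delay] at hsat ⊢
    exact hsim _ φ hφ hsat
  · rintro q v v' t p₁ ⟨-, hsim⟩ hstep
    obtain ⟨ht, hsrc, htgt, hguard, hnn, hv1⟩ := hstep
    dsimp only at hsrc htgt hguard hnn hv1 hsim
    obtain ⟨hg1, hg2, hg3⟩ := hG t ht
    have hgG : ∀ γ ∈ t.guard, γ ∈ G q := by rw [hsrc]; exact hg1
    have hwp0 : ∀ x : X, wp (AC.lower 0 .le x) t.guard t.update ∈ G q := by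
      rw [hsrc]; exact hg2
    have hnn' : t.update.nonneg v' := nonneg_transfer hsim hguard hwp0 hnn
    have hguard' : satG v' t.guard := fun γ hγ => sat_transfer hsim (hgG γ hγ) (hguard γ hγ)
    refine ⟨t.update.app v', ⟨ht, hsrc, htgt, hguard', hnn', rfl⟩, rfl, ?_⟩
    intro δ φ hφ hsat
    rw [hv1] at hsat
    rw [htgt] at hφ
    have hwpφ : wp φ t.guard t.update ∈ G q := by rw [hsrc]; exact hg3 φ hφ
    exact core hsim hgG hguard hnn hnn' φ hwpφ δ hsat
end

section
/- For every timed automaton with syntactically bounded subtraction, the smallest reduced G-map is finite, i.e., assigns a finite set of atomic constraints to every state. -/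
open Classical

section Aux

lemma le_foldr_max {l : List ℕ} {a : ℕ} (h : a ∈ l) : a ≤ l.foldr max 0 := by
  induction l with
  | nil => cases h
  | cons b l ih =>
    rcases List.mem_cons.mp h with rfl | h
    · exact le_max_left _ _
    · exact le_trans (ih h) (le_max_right _ _)

lemma guard_cst_le {Q X : Type} (A : UTA Q X) {t : UTrans Q X} (ht : t ∈ A.trans)
    {φ : AC X} (hφ : φ ∈ t.guard) : φ.cst ≤ maxGuardConst A := by
  have h1 : φ.cst ≤ (t.guard.map AC.cst).foldr max 0 :=
    le_foldr_max (List.mem_map_of_mem hφ)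
  have h2 : (t.guard.map AC.cst).foldr max 0 ≤ maxGuardConst A :=
    le_foldr_max (List.mem_map_of_mem ht)
  exact h1.trans h2

lemma update_cst_le {Q X : Type} [Fintype X] (A : UTA Q X) {t : UTrans Q X}
    (ht : t ∈ A.trans) (x : X) : (t.update x).cst ≤ maxUpdateConst A :=
  le_trans (Finset.le_sup (f := fun x => Rhs.cst (t.update x)) (Finset.mem_univ x)) (le_foldr_max (List.mem_map_of_mem ht))

lemma minUpperG_le {Q X : Type} (A : UTA Q X) {t : UTrans Q X} (ht : t ∈ A.trans)
    {x : X} (hx : hasUpperG t.guard x) : minUpperG t.guard x ≤ maxGuardConst A := by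
  obtain ⟨o, c, hc⟩ := hx
  have hne : {c : ℕ | ∃ o, AC.upper x o c ∈ t.guard}.Nonempty := ⟨c, o, hc⟩
  obtain ⟨o', h'⟩ := Nat.sInf_mem hne
  exact guard_cst_le A ht h'

lemma wp_eq_tt {X : Type} {up : Update X} {φ : AC X} {g : Guard X}
    (h : upInvA up φ = .tt) : wp φ g up = .tt := by
  unfold wp; rw [h]

lemma wp_eq_ff {X : Type} {up : Update X} {φ : AC X} {g : Guard X}
    (h : upInvA up φ = .ff) : wp φ g up = .ff := by
  unfold wp; rw [h]

lemma wp_eq_upper {X : Type} {up : Update X} {φ : AC X} {g : Guard X} {x o d}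
    (h : upInvA up φ = .upper x o d) :
    wp φ g up = if hasUpperG g x then .tt else .upper x o d := by
  unfold wp; rw [h]

lemma wp_eq_lower {X : Type} {up : Update X} {φ : AC X} {g : Guard X} {x o d}
    (h : upInvA up φ = .lower d o x) :
    wp φ g up = if hasUpperG g x ∧ minUpperG g x < d then .lower (minUpperG g x) .le x
      else .lower d o x := by
  unfold wp; rw [h]

lemma wp_eq_dUpper {X : Type} {up : Update X} {φ : AC X} {g : Guard X} {x y o d}
    (h : upInvA up φ = .dUpper x y o d) :
    wp φ g up = if case3G g x y d then .tt else .dUpper x y o d := by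
  unfold wp; rw [h]

lemma wp_eq_dLower {X : Type} {up : Update X} {φ : AC X} {g : Guard X} {x y o d}
    (h : upInvA up φ = .dLower d o x y) :
    wp φ g up = if case3G g x y d then .tt else .dLower d o x y := by
  unfold wp; rw [h]

end Aux
section Key

variable {Q X : Type} [Fintype X] (A : UTA Q X) {t : UTrans Q X}

lemma bound_upper_case (ht : t ∈ A.trans) {φ : AC X} {x o d}
    (h : upInvA t.update φ = .upper x o d)
    (hd : ¬ hasUpperG t.guard x → d ≤ maxGuardConst A + maxUpdateConst A) :
    (wp φ t.guard t.update).cst ≤ maxGuardConst A + maxUpdateConst A := by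
  rw [wp_eq_upper h]; split_ifs with h1
  · exact Nat.zero_le _
  · exact hd h1

lemma bound_lower_case (ht : t ∈ A.trans) {φ : AC X} {x o d}
    (h : upInvA t.update φ = .lower d o x)
    (hd : ¬ hasUpperG t.guard x → d ≤ maxGuardConst A + maxUpdateConst A) :
    (wp φ t.guard t.update).cst ≤ maxGuardConst A + maxUpdateConst A := by
  rw [wp_eq_lower h]; split_ifs with h1
  · exact le_trans (minUpperG_le A ht h1.1) (Nat.le_add_right _ _)
  · by_cases h2 : hasUpperG t.guard x
    · have h3 : ¬ minUpperG t.guard x < d := fun hc => h1 ⟨h2, hc⟩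
      have h4 := minUpperG_le A ht h2
      show d ≤ _
      omega
    · exact hd h2

lemma bound_dUpper_case (ht : t ∈ A.trans) {φ : AC X} {x y o d}
    (h : upInvA t.update φ = .dUpper x y o d)
    (hd : ¬ case3G t.guard x y d → d ≤ maxGuardConst A + maxUpdateConst A) :
    (wp φ t.guard t.update).cst ≤ maxGuardConst A + maxUpdateConst A := by
  rw [wp_eq_dUpper h]; split_ifs with h1
  · exact Nat.zero_le _
  · exact hd h1

lemma bound_dLower_case (ht : t ∈ A.trans) {φ : AC X} {x y o d}
    (h : upInvA t.update φ = .dLower d o x y)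
    (hd : ¬ case3G t.guard x y d → d ≤ maxGuardConst A + maxUpdateConst A) :
    (wp φ t.guard t.update).cst ≤ maxGuardConst A + maxUpdateConst A := by
  rw [wp_eq_dLower h]; split_ifs with h1
  · exact Nat.zero_le _
  · exact hd h1

lemma noUpper_zero
    (hbdd : ∀ (x : X) (c : ℕ), 0 < c → t.update x = Rhs.clock x (-(c:ℤ)) → hasUpperG t.guard x)
    {x : X} {e : ℕ} (hx : t.update x = Rhs.clock x (-(e:ℤ)))
    (h : ¬ hasUpperG t.guard x) : e = 0 := by
  by_contra he
  exact h (hbdd x e (Nat.pos_of_ne_zero he) hx)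

lemma case3_bound (ht : t ∈ A.trans)
    (hbdd : ∀ (x : X) (c : ℕ), 0 < c → t.update x = Rhs.clock x (-(c:ℤ)) → hasUpperG t.guard x)
    {x y : X} {e d : ℕ} (hx : t.update x = Rhs.clock x (-(e:ℤ)))
    (h3 : ¬ case3G t.guard x y d) (he : 0 < e) : d ≤ maxGuardConst A := by
  obtain ⟨o', c', hm⟩ := hbdd x e he hx
  have hc' : c' ≤ maxGuardConst A := guard_cst_le A ht hm
  by_contra hd
  exact h3 (Or.inl ⟨o', c', hm, by omega⟩)

end Key
section Main

lemma wp_cst_le {Q X : Type} [Fintype X] (A : UTA Q X) {t : UTrans Q X} (ht : t ∈ A.trans)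
    (hsub : ∀ x : X, t.update x = Rhs.const 0 ∨ ∃ c : ℕ, t.update x = Rhs.clock x (-(c:ℤ)))
    (hbdd : ∀ (x : X) (c : ℕ), 0 < c → t.update x = Rhs.clock x (-(c:ℤ)) → hasUpperG t.guard x)
    (φ : AC X) (hφ : φ.cst ≤ maxGuardConst A + maxUpdateConst A) :
    (wp φ t.guard t.update).cst ≤ maxGuardConst A + maxUpdateConst A := by
  set N := maxGuardConst A + maxUpdateConst A with hN
  cases φ with
  | tt => rw [wp_eq_tt (show upInvA t.update AC.tt = AC.tt by simp [upInvA])]; exact Nat.zero_le _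
  | ff => rw [wp_eq_ff (show upInvA t.update AC.ff = AC.ff by simp [upInvA])]; exact Nat.zero_le _
  | upper x o c =>
    have hc : c ≤ N := hφ
    rcases hsub x with hx | ⟨e, hx⟩
    · have h : upInvA t.update (AC.upper x o c) =
          if Ineq.holds o ((0:ℕ):ℝ) (c:ℝ) then .tt else .ff := by
        simp only [upInvA, hx]
      split_ifs at h
      · rw [wp_eq_tt h]; exact Nat.zero_le _
      · rw [wp_eq_ff h]; exact Nat.zero_le _
    · have h : upInvA t.update (AC.upper x o c) =
          if (c:ℤ) - (-(e:ℤ)) < 0 then .ff else .upper x o ((c:ℤ) - (-(e:ℤ))).toNat := by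
        simp only [upInvA, hx]
      rw [if_neg (by omega)] at h
      refine bound_upper_case A ht h (fun hnu => ?_)
      have he := noUpper_zero hbdd hx hnu
      omega
  | lower c o x =>
    have hc : c ≤ N := hφ
    rcases hsub x with hx | ⟨e, hx⟩
    · have h : upInvA t.update (AC.lower c o x) =
          if Ineq.holds o (c:ℝ) ((0:ℕ):ℝ) then .tt else .ff := by
        simp only [upInvA, hx]
      split_ifs at h
      · rw [wp_eq_tt h]; exact Nat.zero_le _
      · rw [wp_eq_ff h]; exact Nat.zero_le _
    · have h : upInvA t.update (AC.lower c o x) =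
          if (c:ℤ) - (-(e:ℤ)) < 0 then .tt else .lower ((c:ℤ) - (-(e:ℤ))).toNat o x := by
        simp only [upInvA, hx]
      rw [if_neg (by omega)] at h
      refine bound_lower_case A ht h (fun hnu => ?_)
      have he := noUpper_zero hbdd hx hnu
      omega
  | dUpper x y o c =>
    have hc : c ≤ N := hφ
    rcases hsub x with hx | ⟨e, hx⟩ <;> rcases hsub y with hy | ⟨f, hy⟩
    · have h : upInvA t.update (AC.dUpper x y o c) =
          if Ineq.holds o (((0:ℕ):ℝ) - ((0:ℕ):ℝ)) (c:ℝ) then .tt else .ff := by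
        simp only [upInvA, hx, hy]
      split_ifs at h
      · rw [wp_eq_tt h]; exact Nat.zero_le _
      · rw [wp_eq_ff h]; exact Nat.zero_le _
    · -- x := 0, y := y - f : lower on y
      have h : upInvA t.update (AC.dUpper x y o c) =
          if ((0:ℕ):ℤ) - (-(f:ℤ)) - (c:ℤ) < 0 then .tt
          else .lower (((0:ℕ):ℤ) - (-(f:ℤ)) - (c:ℤ)).toNat o y := by
        simp only [upInvA, hx, hy]
      have hfM : (t.update y).cst ≤ maxUpdateConst A := update_cst_le A ht y
      rw [hy] at hfM
      simp only [Rhs.cst, Int.natAbs_neg, Int.natAbs_natCast] at hfM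
      split_ifs at h with hcond
      · rw [wp_eq_tt h]; exact Nat.zero_le _
      · refine bound_lower_case A ht h (fun _ => ?_)
        omega
    · -- x := x - e, y := 0 : upper on x
      have h : upInvA t.update (AC.dUpper x y o c) =
          if (c:ℤ) + ((0:ℕ):ℤ) - (-(e:ℤ)) < 0 then .ff
          else .upper x o ((c:ℤ) + ((0:ℕ):ℤ) - (-(e:ℤ))).toNat := by
        simp only [upInvA, hx, hy]
      rw [if_neg (by omega)] at h
      refine bound_upper_case A ht h (fun hnu => ?_)
      have he := noUpper_zero hbdd hx hnu
      omega
    · -- x := x - e, y := y - f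
      have h : upInvA t.update (AC.dUpper x y o c) =
          if (c:ℤ) - (-(e:ℤ)) + (-(f:ℤ)) < 0
          then .dLower (-((c:ℤ) - (-(e:ℤ)) + (-(f:ℤ)))).toNat o y x
          else .dUpper x y o ((c:ℤ) - (-(e:ℤ)) + (-(f:ℤ))).toNat := by
        simp only [upInvA, hx, hy]
      have hfM : (t.update y).cst ≤ maxUpdateConst A := update_cst_le A ht y
      rw [hy] at hfM
      simp only [Rhs.cst, Int.natAbs_neg, Int.natAbs_natCast] at hfM
      split_ifs at h with hcond
      · refine bound_dLower_case A ht h (fun _ => ?_)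
        omega
      · refine bound_dUpper_case A ht h (fun h3 => ?_)
        rcases Nat.eq_zero_or_pos e with he | he
        · omega
        · have := case3_bound A ht hbdd hx h3 he
          omega
  | dLower c o x y =>
    have hc : c ≤ N := hφ
    rcases hsub x with hx | ⟨e, hx⟩ <;> rcases hsub y with hy | ⟨f, hy⟩
    · have h : upInvA t.update (AC.dLower c o x y) =
          if Ineq.holds o (c:ℝ) (((0:ℕ):ℝ) - ((0:ℕ):ℝ)) then .tt else .ff := by
        simp only [upInvA, hx, hy]
      split_ifs at h
      · rw [wp_eq_tt h]; exact Nat.zero_le _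
      · rw [wp_eq_ff h]; exact Nat.zero_le _
    · -- x := 0, y := y - f : upper on y
      have h : upInvA t.update (AC.dLower c o x y) =
          if ((0:ℕ):ℤ) - (-(f:ℤ)) - (c:ℤ) < 0 then .ff
          else .upper y o (((0:ℕ):ℤ) - (-(f:ℤ)) - (c:ℤ)).toNat := by
        simp only [upInvA, hx, hy]
      have hfM : (t.update y).cst ≤ maxUpdateConst A := update_cst_le A ht y
      rw [hy] at hfM
      simp only [Rhs.cst, Int.natAbs_neg, Int.natAbs_natCast] at hfM
      split_ifs at h with hcond
      · rw [wp_eq_ff h]; exact Nat.zero_le _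
      · refine bound_upper_case A ht h (fun _ => ?_)
        omega
    · -- x := x - e, y := 0 : lower on x
      have h : upInvA t.update (AC.dLower c o x y) =
          if (c:ℤ) + ((0:ℕ):ℤ) - (-(e:ℤ)) < 0 then .tt
          else .lower ((c:ℤ) + ((0:ℕ):ℤ) - (-(e:ℤ))).toNat o x := by
        simp only [upInvA, hx, hy]
      rw [if_neg (by omega)] at h
      refine bound_lower_case A ht h (fun hnu => ?_)
      have he := noUpper_zero hbdd hx hnu
      omega
    · -- x := x - e, y := y - f
      have h : upInvA t.update (AC.dLower c o x y) =
          if (c:ℤ) - (-(e:ℤ)) + (-(f:ℤ)) < 0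
          then .dUpper y x o (-((c:ℤ) - (-(e:ℤ)) + (-(f:ℤ)))).toNat
          else .dLower ((c:ℤ) - (-(e:ℤ)) + (-(f:ℤ))).toNat o x y := by
        simp only [upInvA, hx, hy]
      have hfM : (t.update y).cst ≤ maxUpdateConst A := update_cst_le A ht y
      rw [hy] at hfM
      simp only [Rhs.cst, Int.natAbs_neg, Int.natAbs_natCast] at hfM
      split_ifs at h with hcond
      · refine bound_dUpper_case A ht h (fun _ => ?_)
        omega
      · refine bound_dLower_case A ht h (fun h3 => ?_)
        rcases Nat.eq_zero_or_pos e with he | he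
        · omega
        · have := case3_bound A ht hbdd hx h3 he
          omega

end Main
section Fin

instance : Finite Ineq :=
  Finite.of_injective (fun i => match i with | .lt => true | .le => false)
    (by intro a b; cases a <;> cases b <;> simp)

noncomputable def encAC {X : Type} (N : ℕ)
    (p : Fin 6 × Option X × Option X × Ineq × Fin (N + 1)) : AC X :=
  match p.1.val, p.2.1, p.2.2.1, p.2.2.2.1, p.2.2.2.2 with
  | 0, _, _, _, _ => .tt
  | 1, _, _, _, _ => .ff
  | 2, some x, _, o, c => .upper x o c.val
  | 3, some x, _, o, c => .lower c.val o x
  | 4, some x, some y, o, c => .dUpper x y o c.val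
  | 5, some x, some y, o, c => .dLower c.val o x y
  | _, _, _, _, _ => .tt

lemma finite_cst_le {X : Type} [Fintype X] (N : ℕ) : {φ : AC X | φ.cst ≤ N}.Finite := by
  apply Set.Finite.subset (Set.finite_range (encAC N))
  rintro φ hφ
  simp only [Set.mem_setOf_eq] at hφ
  cases φ with
  | tt => exact ⟨(⟨0, by omega⟩, none, none, .lt, ⟨0, by omega⟩), by unfold encAC; rfl⟩
  | ff => exact ⟨(⟨1, by omega⟩, none, none, .lt, ⟨0, by omega⟩), by unfold encAC; rfl⟩
  | upper x o c =>
    have hc : c ≤ N := hφ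
    exact ⟨(⟨2, by omega⟩, some x, none, o, ⟨c, by omega⟩), by unfold encAC; rfl⟩
  | lower c o x =>
    have hc : c ≤ N := hφ
    exact ⟨(⟨3, by omega⟩, some x, none, o, ⟨c, by omega⟩), by unfold encAC; rfl⟩
  | dUpper x y o c =>
    have hc : c ≤ N := hφ
    exact ⟨(⟨4, by omega⟩, some x, some y, o, ⟨c, by omega⟩), by unfold encAC; rfl⟩
  | dLower c o x y =>
    have hc : c ≤ N := hφ
    exact ⟨(⟨5, by omega⟩, some x, some y, o, ⟨c, by omega⟩), by unfold encAC; rfl⟩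

end Fin

/-- Theorem `reduced-g-bounds-finite-syntactically-bdd`. The
smallest reduced G-map of a timed automaton with syntactically bounded subtraction
assigns a finite set to every state. -/
theorem stmt10 {Q X : Type} [Fintype Q] [Fintype X] (A : UTA Q X)
    (h : IsSynBoundedSub A) :
    ∀ q, (minRedGMap A q).Finite := by
  intro q
  set N := maxGuardConst A + maxUpdateConst A with hN
  set G : Q → Set (AC X) := fun _ => {φ : AC X | φ.cst ≤ N} with hG
  have hred : IsRedGMap A G := by
    intro t ht
    have hsub : ∀ x : X, t.update x = Rhs.const 0 ∨ ∃ c : ℕ,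
        t.update x = Rhs.clock x (-(c:ℤ)) := h.1 t ht
    have hbdd : ∀ (x : X) (c : ℕ), 0 < c → t.update x = Rhs.clock x (-(c:ℤ)) →
        hasUpperG t.guard x := fun x c hc hx => h.2 t ht x c hc hx
    refine ⟨fun φ hφ => ?_, fun x => ?_, fun φ hφ => ?_⟩
    · exact le_trans (guard_cst_le A ht hφ) (Nat.le_add_right _ _)
    · exact wp_cst_le A ht hsub hbdd (AC.lower 0 .le x) (Nat.zero_le _)
    · exact wp_cst_le A ht hsub hbdd φ hφ
  apply Set.Finite.subset (finite_cst_le N)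
  intro φ hφ
  simp only [minRedGMap, Set.mem_iInter] at hφ
  exact hφ G hred
end
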